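/- For every integer n ≥ 1, the number of standard Young tableaux of the 4-strip shape D = S(4,n) \ {(1,n), (n+3,1)} (the pure 4-strip with n columns with its top-right and bottom-left corner cells removed, a skew shape with 4n−2 cells) equals (4n−2)!·( A_{2n−1}² / ((2n−1)!)² − A_{2n−2}·A_{2n} / ((2n−2)!·(2n)!) ), where A_j is the number of up-down permutations of j elements. (In terms of tangent and Euler numbers this is (4n−2)!·( T_n²/((2n−1)!)² − (−E_{2n−2}E_{2n})/((2n−2)!(2n)!) ).) -/

import Mathlib

/-- The number of up-down (alternating) permutations of `{1, …, j}`: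
permutations with `σ(1) < σ(2) > σ(3) < σ(4) > ⋯`. -/
noncomputable def updownCount (j : ℕ) : ℕ :=
  Nat.card {σ : Equiv.Perm (Fin j) //
    ∀ i : Fin j, ∀ h : (i : ℕ) + 1 < j,
      if (i : ℕ) % 2 = 0 then σ i < σ ⟨(i : ℕ) + 1, h⟩
      else σ ⟨(i : ℕ) + 1, h⟩ < σ i}

/-- The number of standard Young tableaux of shape `D`: bijections from the
cells of `D` to `{1, …, |D|}` increasing along rows and along columns. -/
noncomputable def sytCount (D : Finset (ℤ × ℤ)) : ℕ :=
  Nat.card {f : {c : ℤ × ℤ // c ∈ D} ≃ Fin D.card //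
    ∀ a b : {c : ℤ × ℤ // c ∈ D},
      ((a.1.1 = b.1.1 ∧ a.1.2 < b.1.2) ∨ (a.1.2 = b.1.2 ∧ a.1.1 < b.1.1)) →
      f a < f b}

/-- The pure `m`-strip diagram with `n` columns:
`S(m,n) = {(r,c) : 1 ≤ c ≤ n, n+1−c ≤ r ≤ n+m−c}`. -/
noncomputable def strip (m n : ℕ) : Finset (ℤ × ℤ) :=
  (Finset.Icc (1 : ℤ) ((n : ℤ) + m) ×ˢ Finset.Icc (1 : ℤ) (n : ℤ)).filter
    (fun rc => (n : ℤ) + 1 - rc.2 ≤ rc.1 ∧ rc.1 ≤ (n : ℤ) + m - rc.2)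

namespace SytStrip

def lseq {p q N : ℕ} (e : Fin p ⊕ Fin q ≃ Fin N) : ℕ → ℕ :=
  fun i => if h : i < p then (e (Sum.inl ⟨i, h⟩) : ℕ) else 0
def rseq {p q N : ℕ} (e : Fin p ⊕ Fin q ≃ Fin N) : ℕ → ℕ :=
  fun i => if h : i < q then (e (Sum.inr ⟨i, h⟩) : ℕ) else 0
def Zig (m par : ℕ) (x : ℕ → ℕ) : Prop :=
  ∀ i, i + 1 < m → (x i < x (i + 1) ↔ i % 2 = par)

variable {k : ℕ}

def Good (k : ℕ) (e : Fin (2*k+1) ⊕ Fin (2*k+1) ≃ Fin (4*k+2)) : Prop :=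
  ∀ i, i % 2 = 0 → (i < 2*k+1 → lseq e i < rseq e i) ∧
    (i + 2 < 2*k+1 → lseq e i < rseq e (i+2))

def validAB (k : ℕ) (e : Fin (2*k+1) ⊕ Fin (2*k+1) ≃ Fin (4*k+2)) (J : ℕ) : Prop :=
  J ≤ 2*k ∧ (rseq e J < lseq e J ↔ J % 2 = 0) ∧
    (J = 0 ∨ J = 2*k ∨ (lseq e (J-1) < rseq e (J+1) ↔ J % 2 = 0))

def validCD (k : ℕ) (e : Fin (2*k+2) ⊕ Fin (2*k) ≃ Fin (4*k+2)) (J : ℕ) : Prop :=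
  J ≤ 2*k ∧ (J = 2*k ∨ (lseq e J < rseq e J ↔ J % 2 = 0)) ∧
    (J = 0 ∨ (rseq e (J-1) < lseq e (J+1) ↔ J % 2 = 0))

instance (k e J) : Decidable (validAB k e J) := by unfold validAB; infer_instance
instance (k e J) : Decidable (validCD k e J) := by unfold validCD; infer_instance

lemma lr_ne {p q N : ℕ} (e : Fin p ⊕ Fin q ≃ Fin N) {i j : ℕ} (hi : i < p) (hj : j < q) :
    lseq e i ≠ rseq e j := by
  simp only [lseq, rseq, dif_pos hi, dif_pos hj]
  intro h
  have := e.injective (Fin.val_injective h)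
  simp at this

lemma ll_ne {p q N : ℕ} (e : Fin p ⊕ Fin q ≃ Fin N) {i j : ℕ} (hi : i < p) (hj : j < p)
    (hij : i ≠ j) : lseq e i ≠ lseq e j := by
  simp only [lseq, dif_pos hi, dif_pos hj]
  intro h
  have := e.injective (Fin.val_injective h)
  simp only [Sum.inl.injEq, Fin.mk.injEq] at this
  exact hij this

lemma rr_ne {p q N : ℕ} (e : Fin p ⊕ Fin q ≃ Fin N) {i j : ℕ} (hi : i < q) (hj : j < q)
    (hij : i ≠ j) : rseq e i ≠ rseq e j := by
  simp only [rseq, dif_pos hi, dif_pos hj]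
  intro h
  have := e.injective (Fin.val_injective h)
  simp only [Sum.inr.injEq, Fin.mk.injEq] at this
  exact hij this

/-- existence of a valid cut for a bad (a,b)-configuration. -/
lemma exists_validAB (e : Fin (2*k+1) ⊕ Fin (2*k+1) ≃ Fin (4*k+2))
    (ha : Zig (2*k+1) 1 (lseq e)) (hb : Zig (2*k+1) 0 (rseq e))
    (hbad : ¬ Good k e) : ∃ J, validAB k e J := by
  have hex : ∃ i, i ≤ 2*k ∧ i % 2 = 0 ∧
      (rseq e i < lseq e i ∨ (i + 2 ≤ 2*k ∧ rseq e (i+2) < lseq e i)) := by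
    by_contra hno
    push_neg at hno
    apply hbad
    intro i hi
    refine ⟨fun hilt => ?_, fun hilt => ?_⟩
    · have h1 := hno i (by omega) hi
      have hne := lr_ne e (i := i) (j := i) (by omega) (by omega)
      omega
    · have h1 := hno i (by omega) hi
      have hne := lr_ne e (i := i) (j := i+2) (by omega) (by omega)
      omega
  classical
  obtain ⟨k0, ⟨hk0le, hk0even, hk0viol⟩, hmin⟩ :
      ∃ k0, (k0 ≤ 2*k ∧ k0 % 2 = 0 ∧
        (rseq e k0 < lseq e k0 ∨ (k0 + 2 ≤ 2*k ∧ rseq e (k0+2) < lseq e k0))) ∧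
        ∀ i < k0, ¬ (i ≤ 2*k ∧ i % 2 = 0 ∧
          (rseq e i < lseq e i ∨ (i + 2 ≤ 2*k ∧ rseq e (i+2) < lseq e i))) :=
    ⟨Nat.find hex, Nat.find_spec hex, fun i h => Nat.find_min hex h⟩
  by_cases hA : rseq e k0 < lseq e k0
  · -- cut at k0
    refine ⟨k0, hk0le, by omega, ?_⟩
    by_cases h0 : k0 = 0; · left; exact h0
    by_cases h2k : k0 = 2*k; · right; left; exact h2k
    right; right
    have hk2 : 2 ≤ k0 := by omega
    have hmin' := hmin (k0 - 2) (by omega)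
    push_neg at hmin'
    obtain ⟨h1, h2⟩ := hmin' (by omega) (by omega)
    have e3 : k0 - 2 + 2 = k0 := by omega
    rw [e3] at h2
    have hne1 := lr_ne e (i := k0-2) (j := k0) (by omega) (by omega)
    have hab : lseq e (k0-2) < rseq e k0 := by
      have := h2 (by omega)
      omega
    have hpa := ha (k0-2) (by omega)
    have e1 : k0 - 2 + 1 = k0 - 1 := by omega
    rw [e1] at hpa
    have hne2 := ll_ne e (i := k0-2) (j := k0-1) (by omega) (by omega) (by omega)
    have hpb := hb k0 (by omega)
    omega
  · -- then second violation holds; cut at k0+1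
    have hne0 := lr_ne e (i := k0) (j := k0) (by omega) (by omega)
    obtain ⟨hle2, hviol⟩ : k0 + 2 ≤ 2*k ∧ rseq e (k0+2) < lseq e k0 := by omega
    have hgood0 : lseq e k0 < rseq e k0 := by omega
    refine ⟨k0 + 1, by omega, ?_, ?_⟩
    · -- need ¬ (b (k0+1) < a (k0+1)), parity odd
      have hpa := ha k0 (by omega)
      have hpb := hb k0 (by omega)
      have hne1 := lr_ne e (i := k0+1) (j := k0+1) (by omega) (by omega)
      have hne2 := ll_ne e (i := k0) (j := k0+1) (by omega) (by omega) (by omega)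
      omega
    · right; right
      have e1 : k0 + 1 - 1 = k0 := by omega
      have e2 : k0 + 1 + 1 = k0 + 2 := rfl
      rw [e1, e2]
      omega

/-- a valid cut witnesses badness. -/
lemma not_good_of_validAB (e : Fin (2*k+1) ⊕ Fin (2*k+1) ≃ Fin (4*k+2))
    {J : ℕ} (hv : validAB k e J) : ¬ Good k e := by
  obtain ⟨hJ, hP, hQ⟩ := hv
  intro hg
  by_cases hpar : J % 2 = 0
  · have := (hg J hpar).1 (by omega)
    omega
  · have hodd : J % 2 = 1 := by omega
    have hne := lr_ne e (i := J-1) (j := J+1) (by omega) (by omega)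
    have hg1 := (hg (J-1) (by omega)).2 (by omega)
    have e1 : J - 1 + 2 = J + 1 := by omega
    rw [e1] at hg1
    omega

/-- existence of a valid cut for any (c,d)-configuration. -/
lemma exists_validCD (e : Fin (2*k+2) ⊕ Fin (2*k) ≃ Fin (4*k+2))
    (hc : Zig (2*k+2) 0 (lseq e)) (hd : Zig (2*k) 1 (rseq e)) :
    ∃ J, validCD k e J := by
  classical
  rcases Nat.eq_zero_or_pos k with hk | hk
  · exact ⟨0, by omega, by left; omega, by left; rfl⟩
  -- k0 : minimal even index ≤ 2k-2 with c k0 < d k0, else 2k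
  by_cases hex : ∃ i, i ≤ 2*k-2 ∧ i % 2 = 0 ∧ lseq e i < rseq e i
  · obtain ⟨k0, ⟨hk0le, hk0even, hk0v⟩, hmin⟩ :
        ∃ k0, (k0 ≤ 2*k-2 ∧ k0 % 2 = 0 ∧ lseq e k0 < rseq e k0) ∧
          ∀ i < k0, ¬ (i ≤ 2*k-2 ∧ i % 2 = 0 ∧ lseq e i < rseq e i) :=
      ⟨Nat.find hex, Nat.find_spec hex, fun i h => Nat.find_min hex h⟩
    by_cases h0 : k0 = 0
    · subst h0
      exact ⟨0, by omega, by right; omega, by left; rfl⟩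
    by_cases hQ : rseq e (k0-1) < lseq e (k0+1)
    · refine ⟨k0, by omega, by right; omega, ?_⟩
      right; omega
    · -- cut at k0 - 1
      have h2 : 2 ≤ k0 := by omega
      have hmin' := hmin (k0-2) (by omega)
      have hdc2 : rseq e (k0-2) < lseq e (k0-2) := by
        have hne := lr_ne e (i := k0-2) (j := k0-2) (by omega) (by omega)
        omega
      have hpc2 := hc (k0-2) (by omega)
      have e1 : k0 - 2 + 1 = k0 - 1 := by omega
      rw [e1] at hpc2
      have hpd2 := hd (k0-2) (by omega)
      rw [e1] at hpd2
      have hned := rr_ne e (i := k0-2) (j := k0-1) (by omega) (by omega) (by omega)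
      -- d (k0-1) < d (k0-2), c (k0-2) < c (k0-1)
      have hP : rseq e (k0-1) < lseq e (k0-1) := by
        have hne := lr_ne e (i := k0-1) (j := k0-1) (by omega) (by omega)
        omega
      refine ⟨k0-1, by omega, ?_, ?_⟩
      · right
        have : (k0-1) % 2 = 1 := by omega
        omega
      · right
        have e2 : k0 - 1 - 1 = k0 - 2 := by omega
        have e3 : k0 - 1 + 1 = k0 := by omega
        rw [e2, e3]
        -- need ¬ (d (k0-2) < c k0) since k0-1 odd; chain c k0 < c (k0+1) < d(k0-1) < d(k0-2)
        have hpc := hc k0 (by omega)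
        have hnq : lseq e (k0+1) < rseq e (k0-1) := by
          have hne := lr_ne e (i := k0+1) (j := k0-1) (by omega) (by omega)
          omega
        have : (k0-1) % 2 = 1 := by omega
        omega
  · -- no violation: k0 = 2k
    push_neg at hex
    by_cases hQ : rseq e (2*k-1) < lseq e (2*k+1)
    · exact ⟨2*k, le_refl _, by left; rfl, by right; omega⟩
    · -- cut at 2k-1
      have hmin' := hex (2*k-2) (by omega) (by omega)
      have hdc2 : rseq e (2*k-2) < lseq e (2*k-2) := by
        have hne := lr_ne e (i := 2*k-2) (j := 2*k-2) (by omega) (by omega)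
        omega
      have hpc2 := hc (2*k-2) (by omega)
      have e1 : 2*k - 2 + 1 = 2*k - 1 := by omega
      rw [e1] at hpc2
      have hpd2 : 2*k - 2 + 1 < 2*k → (rseq e (2*k-2) < rseq e (2*k-1) ↔ (2*k-2) % 2 = 1) := by
        intro h; have := hd (2*k-2) h; rwa [e1] at this
      have hP : rseq e (2*k-1) < lseq e (2*k-1) := by
        rcases Nat.lt_or_ge (2*k-2+1) (2*k) with h | h
        · have hpd2' := hpd2 h
          have hned := rr_ne e (i := 2*k-2) (j := 2*k-1) (by omega) (by omega) (by omega)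
          have hne := lr_ne e (i := 2*k-1) (j := 2*k-1) (by omega) (by omega)
          omega
        · -- k = 0 impossible since hk
          omega
      refine ⟨2*k-1, by omega, ?_, ?_⟩
      · right
        have : (2*k-1) % 2 = 1 := by omega
        omega
      · right
        have e2 : 2*k - 1 - 1 = 2*k - 2 := by omega
        have e3 : 2*k - 1 + 1 = 2*k := by omega
        rw [e2, e3]
        have hpc := hc (2*k) (by omega)
        have e4 : 2*k + 1 = 2*k+1 := rfl
        have hnq : lseq e (2*k+1) < rseq e (2*k-1) := by
          have hne := lr_ne e (i := 2*k+1) (j := 2*k-1) (by omega) (by omega)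
          omega
        have hned : rseq e (2*k-1) ≠ rseq e (2*k-2) := by
          exact (rr_ne e (i := 2*k-1) (j := 2*k-2) (by omega) (by omega) (by omega))
        have hpd2' : 2*k - 2 + 1 < 2*k → (rseq e (2*k-2) < rseq e (2*k-1) ↔ (2*k-2) % 2 = 1) := hpd2
        have : (2*k-1) % 2 = 1 := by omega
        rcases Nat.lt_or_ge (2*k-2+1) (2*k) with h | h
        · have := hpd2' h
          omega
        · omega

def rhoFun (k J : ℕ) (hJ : J ≤ 2*k) : Fin (2*k+2) ⊕ Fin (2*k) → Fin (2*k+1) ⊕ Fin (2*k+1) :=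
  Sum.elim
    (fun i => if _ : (i:ℕ) ≤ J then Sum.inr ⟨i, by omega⟩
      else Sum.inl ⟨(i:ℕ)-1, by have := i.2; omega⟩)
    (fun i => if _ : (i:ℕ) < J then Sum.inl ⟨i, by omega⟩
      else Sum.inr ⟨(i:ℕ)+1, by have := i.2; omega⟩)

def rhoInv (k J : ℕ) (hJ : J ≤ 2*k) : Fin (2*k+1) ⊕ Fin (2*k+1) → Fin (2*k+2) ⊕ Fin (2*k) :=
  Sum.elim
    (fun i => if _ : (i:ℕ) < J then Sum.inr ⟨i, by omega⟩
      else Sum.inl ⟨(i:ℕ)+1, by have := i.2; omega⟩)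
    (fun i => if _ : (i:ℕ) ≤ J then Sum.inl ⟨i, by omega⟩
      else Sum.inr ⟨(i:ℕ)-1, by have := i.2; omega⟩)

lemma rhoFun_inl_le {J hJ} (i : Fin (2*k+2)) (h : (i:ℕ) ≤ J) :
    rhoFun k J hJ (Sum.inl i) = Sum.inr ⟨i, by omega⟩ := by
  simp only [rhoFun, Sum.elim_inl]; rw [dif_pos h]
lemma rhoFun_inl_gt {J hJ} (i : Fin (2*k+2)) (h : J < (i:ℕ)) :
    rhoFun k J hJ (Sum.inl i) = Sum.inl ⟨(i:ℕ)-1, by have := i.2; omega⟩ := by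
  simp only [rhoFun, Sum.elim_inl]; rw [dif_neg (by omega : ¬ (i:ℕ) ≤ J)]
lemma rhoFun_inr_lt {J hJ} (i : Fin (2*k)) (h : (i:ℕ) < J) :
    rhoFun k J hJ (Sum.inr i) = Sum.inl ⟨i, by omega⟩ := by
  simp only [rhoFun, Sum.elim_inr]; rw [dif_pos h]
lemma rhoFun_inr_ge {J hJ} (i : Fin (2*k)) (h : J ≤ (i:ℕ)) :
    rhoFun k J hJ (Sum.inr i) = Sum.inr ⟨(i:ℕ)+1, by have := i.2; omega⟩ := by
  simp only [rhoFun, Sum.elim_inr]; rw [dif_neg (by omega : ¬ (i:ℕ) < J)]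
lemma rhoInv_inl_lt {J hJ} (i : Fin (2*k+1)) (h : (i:ℕ) < J) :
    rhoInv k J hJ (Sum.inl i) = Sum.inr ⟨i, by omega⟩ := by
  simp only [rhoInv, Sum.elim_inl]; rw [dif_pos h]
lemma rhoInv_inl_ge {J hJ} (i : Fin (2*k+1)) (h : J ≤ (i:ℕ)) :
    rhoInv k J hJ (Sum.inl i) = Sum.inl ⟨(i:ℕ)+1, by have := i.2; omega⟩ := by
  simp only [rhoInv, Sum.elim_inl]; rw [dif_neg (by omega : ¬ (i:ℕ) < J)]
lemma rhoInv_inr_le {J hJ} (i : Fin (2*k+1)) (h : (i:ℕ) ≤ J) :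
    rhoInv k J hJ (Sum.inr i) = Sum.inl ⟨i, by omega⟩ := by
  simp only [rhoInv, Sum.elim_inr]; rw [dif_pos h]
lemma rhoInv_inr_gt {J hJ} (i : Fin (2*k+1)) (h : J < (i:ℕ)) :
    rhoInv k J hJ (Sum.inr i) = Sum.inr ⟨(i:ℕ)-1, by have := i.2; omega⟩ := by
  simp only [rhoInv, Sum.elim_inr]; rw [dif_neg (by omega : ¬ (i:ℕ) ≤ J)]

/-- reindexing equivalence for the tail-swap at cut `J`. -/
def rho (k J : ℕ) (hJ : J ≤ 2*k) : Fin (2*k+2) ⊕ Fin (2*k) ≃ Fin (2*k+1) ⊕ Fin (2*k+1) where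
  toFun := rhoFun k J hJ
  invFun := rhoInv k J hJ
  left_inv x := by
    rcases x with i | i
    · by_cases h : (i:ℕ) ≤ J
      · rw [rhoFun_inl_le i h, rhoInv_inr_le _ h]
      · rw [rhoFun_inl_gt i (by omega), rhoInv_inl_ge _ (by simp only [Fin.val_mk]; omega)]
        congr 1 <;> exact Fin.ext (by simp only [Fin.val_mk]; omega)
    · by_cases h : (i:ℕ) < J
      · rw [rhoFun_inr_lt i h, rhoInv_inl_lt _ h]
      · rw [rhoFun_inr_ge i (by omega), rhoInv_inr_gt _ (by simp only [Fin.val_mk]; omega)]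
        congr 1 <;> exact Fin.ext (by simp only [Fin.val_mk]; omega)
  right_inv x := by
    rcases x with i | i
    · by_cases h : (i:ℕ) < J
      · rw [rhoInv_inl_lt i h, rhoFun_inr_lt _ h]
      · rw [rhoInv_inl_ge i (by omega), rhoFun_inl_gt _ (by simp only [Fin.val_mk]; omega)]
        congr 1 <;> exact Fin.ext (by simp only [Fin.val_mk]; omega)
    · by_cases h : (i:ℕ) ≤ J
      · rw [rhoInv_inr_le i h, rhoFun_inl_le _ h]
      · rw [rhoInv_inr_gt i (by omega), rhoFun_inr_ge _ (by simp only [Fin.val_mk]; omega)]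
        congr 1 <;> exact Fin.ext (by simp only [Fin.val_mk]; omega)

def cdOf (e : Fin (2*k+1) ⊕ Fin (2*k+1) ≃ Fin (4*k+2)) (J : ℕ) (hJ : J ≤ 2*k) :
    Fin (2*k+2) ⊕ Fin (2*k) ≃ Fin (4*k+2) := (rho k J hJ).trans e

def abOf (e : Fin (2*k+2) ⊕ Fin (2*k) ≃ Fin (4*k+2)) (J : ℕ) (hJ : J ≤ 2*k) :
    Fin (2*k+1) ⊕ Fin (2*k+1) ≃ Fin (4*k+2) := (rho k J hJ).symm.trans e

lemma abOf_cdOf (e : Fin (2*k+1) ⊕ Fin (2*k+1) ≃ Fin (4*k+2)) (J : ℕ) (hJ : J ≤ 2*k) :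
    abOf (cdOf e J hJ) J hJ = e := by
  simp [abOf, cdOf, ← Equiv.trans_assoc]

lemma cdOf_abOf (e : Fin (2*k+2) ⊕ Fin (2*k) ≃ Fin (4*k+2)) (J : ℕ) (hJ : J ≤ 2*k) :
    cdOf (abOf e J hJ) J hJ = e := by
  simp [abOf, cdOf, ← Equiv.trans_assoc]

section seqs
variable (e : Fin (2*k+1) ⊕ Fin (2*k+1) ≃ Fin (4*k+2)) (J : ℕ) (hJ : J ≤ 2*k)

lemma lseq_cdOf_le {i : ℕ} (h : i ≤ J) : lseq (cdOf e J hJ) i = rseq e i := by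
  have h1 : i < 2*k+2 := by omega
  have h2 : i < 2*k+1 := by omega
  simp only [lseq, rseq, cdOf, dif_pos h1, dif_pos h2, Equiv.trans_apply, Equiv.coe_fn_mk, rho]
  rw [rhoFun_inl_le _ h]

lemma lseq_cdOf_gt {i : ℕ} (h : J < i) (h1 : i < 2*k+2) : lseq (cdOf e J hJ) i = lseq e (i-1) := by
  have h2 : i - 1 < 2*k+1 := by omega
  simp only [lseq, rseq, cdOf, dif_pos h1, dif_pos h2, Equiv.trans_apply, Equiv.coe_fn_mk, rho]
  rw [rhoFun_inl_gt _ h]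

lemma rseq_cdOf_lt {i : ℕ} (h : i < J) : rseq (cdOf e J hJ) i = lseq e i := by
  have h1 : i < 2*k := by omega
  have h2 : i < 2*k+1 := by omega
  simp only [lseq, rseq, cdOf, dif_pos h1, dif_pos h2, Equiv.trans_apply, Equiv.coe_fn_mk, rho]
  rw [rhoFun_inr_lt _ h]

lemma rseq_cdOf_ge {i : ℕ} (h : J ≤ i) (h1 : i < 2*k) : rseq (cdOf e J hJ) i = rseq e (i+1) := by
  have h2 : i + 1 < 2*k+1 := by omega
  simp only [lseq, rseq, cdOf, dif_pos h1, dif_pos h2, Equiv.trans_apply, Equiv.coe_fn_mk, rho]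
  rw [rhoFun_inr_ge _ h]

end seqs

section seqs2
variable (e : Fin (2*k+2) ⊕ Fin (2*k) ≃ Fin (4*k+2)) (J : ℕ) (hJ : J ≤ 2*k)

lemma lseq_abOf_lt {i : ℕ} (h : i < J) : lseq (abOf e J hJ) i = rseq e i := by
  have h1 : i < 2*k+1 := by omega
  have h2 : i < 2*k := by omega
  simp only [lseq, rseq, abOf, dif_pos h1, dif_pos h2, Equiv.trans_apply, Equiv.symm,
    Equiv.coe_fn_mk, rho]
  rw [rhoInv_inl_lt _ h]

lemma lseq_abOf_ge {i : ℕ} (h : J ≤ i) (h1 : i < 2*k+1) :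
    lseq (abOf e J hJ) i = lseq e (i+1) := by
  have h2 : i + 1 < 2*k+2 := by omega
  simp only [lseq, rseq, abOf, dif_pos h1, dif_pos h2, Equiv.trans_apply, Equiv.symm,
    Equiv.coe_fn_mk, rho]
  rw [rhoInv_inl_ge _ h]

lemma rseq_abOf_le {i : ℕ} (h : i ≤ J) : rseq (abOf e J hJ) i = lseq e i := by
  have h1 : i < 2*k+1 := by omega
  have h2 : i < 2*k+2 := by omega
  simp only [lseq, rseq, abOf, dif_pos h1, dif_pos h2, Equiv.trans_apply, Equiv.symm,
    Equiv.coe_fn_mk, rho]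
  rw [rhoInv_inr_le _ h]

lemma rseq_abOf_gt {i : ℕ} (h : J < i) (h1 : i < 2*k+1) :
    rseq (abOf e J hJ) i = rseq e (i-1) := by
  have h2 : i - 1 < 2*k := by omega
  simp only [lseq, rseq, abOf, dif_pos h1, dif_pos h2, Equiv.trans_apply, Equiv.symm,
    Equiv.coe_fn_mk, rho]
  rw [rhoInv_inr_gt _ h]

end seqs2
section transfer
variable {k : ℕ}

lemma zig_lseq_cdOf (e : Fin (2*k+1) ⊕ Fin (2*k+1) ≃ Fin (4*k+2)) (J : ℕ) (hJ : J ≤ 2*k)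
    (ha : Zig (2*k+1) 1 (lseq e)) (hb : Zig (2*k+1) 0 (rseq e)) (hv : validAB k e J) :
    Zig (2*k+2) 0 (lseq (cdOf e J hJ)) := by
  intro i hi
  rcases Nat.lt_trichotomy i J with h | h | h
  · rw [lseq_cdOf_le e J hJ (by omega), lseq_cdOf_le e J hJ (by omega)]
    exact hb i (by omega)
  · subst h
    rw [lseq_cdOf_le e i hJ le_rfl, lseq_cdOf_gt e i hJ (by omega) hi, Nat.add_sub_cancel]
    exact hv.2.1
  · rw [lseq_cdOf_gt e J hJ (by omega) (by omega), lseq_cdOf_gt e J hJ (by omega) hi,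
      Nat.add_sub_cancel]
    have := ha (i-1) (by omega)
    rw [show i - 1 + 1 = i by omega] at this
    omega

lemma zig_rseq_cdOf (e : Fin (2*k+1) ⊕ Fin (2*k+1) ≃ Fin (4*k+2)) (J : ℕ) (hJ : J ≤ 2*k)
    (ha : Zig (2*k+1) 1 (lseq e)) (hb : Zig (2*k+1) 0 (rseq e)) (hv : validAB k e J) :
    Zig (2*k) 1 (rseq (cdOf e J hJ)) := by
  intro i hi
  rcases Nat.lt_trichotomy (i+1) J with h | h | h
  · rw [rseq_cdOf_lt e J hJ (by omega), rseq_cdOf_lt e J hJ (by omega)]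
    exact ha i (by omega)
  · rw [rseq_cdOf_lt e J hJ (by omega), rseq_cdOf_ge e J hJ (by omega) hi]
    rcases hv.2.2 with h0 | h0 | h0
    · omega
    · omega
    · rw [show J - 1 = i by omega, show J + 1 = i + 1 + 1 by omega] at h0
      omega
  · rw [rseq_cdOf_ge e J hJ (by omega) (by omega), rseq_cdOf_ge e J hJ (by omega) hi]
    have := hb (i+1) (by omega)
    omega

lemma validCD_cdOf_self (e : Fin (2*k+1) ⊕ Fin (2*k+1) ≃ Fin (4*k+2)) (J : ℕ) (hJ : J ≤ 2*k)
    (ha : Zig (2*k+1) 1 (lseq e)) (hb : Zig (2*k+1) 0 (rseq e)) :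
    validCD k (cdOf e J hJ) J := by
  refine ⟨hJ, ?_, ?_⟩
  · by_cases h2k : J = 2*k
    · exact Or.inl h2k
    right
    rw [lseq_cdOf_le e J hJ le_rfl, rseq_cdOf_ge e J hJ le_rfl (by omega)]
    exact hb J (by omega)
  · by_cases h0 : J = 0
    · exact Or.inl h0
    right
    rw [rseq_cdOf_lt e J hJ (by omega), lseq_cdOf_gt e J hJ (by omega) (by omega),
      Nat.add_sub_cancel]
    have := ha (J-1) (by omega)
    rw [show J - 1 + 1 = J by omega] at this
    omega

lemma validCD_cdOf_of_lt (e : Fin (2*k+1) ⊕ Fin (2*k+1) ≃ Fin (4*k+2)) (J : ℕ) (hJ : J ≤ 2*k)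
    {i : ℕ} (hi : i < J) : validCD k (cdOf e J hJ) i ↔ validAB k e i := by
  unfold validCD validAB
  rw [lseq_cdOf_le e J hJ (by omega), rseq_cdOf_lt e J hJ hi,
    rseq_cdOf_lt e J hJ (by omega : i - 1 < J), lseq_cdOf_le e J hJ (by omega)]
  omega

lemma zig_lseq_abOf (e : Fin (2*k+2) ⊕ Fin (2*k) ≃ Fin (4*k+2)) (J : ℕ) (hJ : J ≤ 2*k)
    (hc : Zig (2*k+2) 0 (lseq e)) (hd : Zig (2*k) 1 (rseq e)) (hv : validCD k e J) :
    Zig (2*k+1) 1 (lseq (abOf e J hJ)) := by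
  intro i hi
  rcases Nat.lt_trichotomy (i+1) J with h | h | h
  · rw [lseq_abOf_lt e J hJ (by omega), lseq_abOf_lt e J hJ (by omega)]
    exact hd i (by omega)
  · rw [lseq_abOf_lt e J hJ (by omega), lseq_abOf_ge e J hJ (by omega) hi]
    rcases hv.2.2 with h0 | h0
    · omega
    · rw [show J - 1 = i by omega, show J + 1 = i + 1 + 1 by omega] at h0
      omega
  · rw [lseq_abOf_ge e J hJ (by omega) (by omega), lseq_abOf_ge e J hJ (by omega) hi]
    have := hc (i+1) (by omega)
    omega

lemma zig_rseq_abOf (e : Fin (2*k+2) ⊕ Fin (2*k) ≃ Fin (4*k+2)) (J : ℕ) (hJ : J ≤ 2*k)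
    (hc : Zig (2*k+2) 0 (lseq e)) (hd : Zig (2*k) 1 (rseq e)) (hv : validCD k e J) :
    Zig (2*k+1) 0 (rseq (abOf e J hJ)) := by
  intro i hi
  rcases Nat.lt_trichotomy i J with h | h | h
  · rw [rseq_abOf_le e J hJ (by omega), rseq_abOf_le e J hJ (by omega)]
    exact hc i (by omega)
  · subst h
    rw [rseq_abOf_le e i hJ le_rfl, rseq_abOf_gt e i hJ (by omega) hi, Nat.add_sub_cancel]
    rcases hv.2.1 with h0 | h0
    · omega
    · exact h0
  · rw [rseq_abOf_gt e J hJ (by omega) (by omega), rseq_abOf_gt e J hJ (by omega) hi,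
      Nat.add_sub_cancel]
    have := hd (i-1) (by omega)
    rw [show i - 1 + 1 = i by omega] at this
    omega

lemma validAB_abOf_self (e : Fin (2*k+2) ⊕ Fin (2*k) ≃ Fin (4*k+2)) (J : ℕ) (hJ : J ≤ 2*k)
    (hc : Zig (2*k+2) 0 (lseq e)) (hd : Zig (2*k) 1 (rseq e)) :
    validAB k (abOf e J hJ) J := by
  refine ⟨hJ, ?_, ?_⟩
  · rw [rseq_abOf_le e J hJ le_rfl, lseq_abOf_ge e J hJ le_rfl (by omega)]
    have := hc J (by omega)
    omega
  · by_cases h0 : J = 0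
    · exact Or.inl h0
    by_cases h2k : J = 2*k
    · exact Or.inr (Or.inl h2k)
    right; right
    rw [lseq_abOf_lt e J hJ (by omega), rseq_abOf_gt e J hJ (by omega) (by omega),
      Nat.add_sub_cancel]
    have := hd (J-1) (by omega)
    rw [show J - 1 + 1 = J by omega] at this
    omega

lemma validAB_abOf_of_lt (e : Fin (2*k+2) ⊕ Fin (2*k) ≃ Fin (4*k+2)) (J : ℕ) (hJ : J ≤ 2*k)
    {i : ℕ} (hi : i < J) : validAB k (abOf e J hJ) i ↔ validCD k e i := by
  unfold validCD validAB
  rw [rseq_abOf_le e J hJ (by omega), lseq_abOf_lt e J hJ hi,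
    lseq_abOf_lt e J hJ (by omega : i - 1 < J), rseq_abOf_le e J hJ (by omega)]
  omega

end transfer

section involution
variable {k : ℕ}

/-- the type of (a,b)-configurations. -/
abbrev ABt (k : ℕ) :=
  {e : Fin (2*k+1) ⊕ Fin (2*k+1) ≃ Fin (4*k+2) //
    Zig (2*k+1) 1 (lseq e) ∧ Zig (2*k+1) 0 (rseq e)}

/-- the type of (c,d)-configurations. -/
abbrev CDt (k : ℕ) :=
  {e : Fin (2*k+2) ⊕ Fin (2*k) ≃ Fin (4*k+2) //
    Zig (2*k+2) 0 (lseq e) ∧ Zig (2*k) 1 (rseq e)}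

lemma abOf_congr (e : Fin (2*k+2) ⊕ Fin (2*k) ≃ Fin (4*k+2)) {J J' : ℕ} (h : J = J')
    (hJ : J ≤ 2*k) (hJ' : J' ≤ 2*k) : abOf e J hJ = abOf e J' hJ' := by subst h; rfl

noncomputable def fwd (k : ℕ) (x : {x : ABt k // ¬ Good k x.1}) : CDt k :=
  ⟨cdOf x.1.1 (Nat.find (exists_validAB x.1.1 x.1.2.1 x.1.2.2 x.2))
      (Nat.find_spec (exists_validAB x.1.1 x.1.2.1 x.1.2.2 x.2)).1,
    zig_lseq_cdOf _ _ _ x.1.2.1 x.1.2.2 (Nat.find_spec _),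
    zig_rseq_cdOf _ _ _ x.1.2.1 x.1.2.2 (Nat.find_spec _)⟩

noncomputable def bwd (k : ℕ) (y : CDt k) : {x : ABt k // ¬ Good k x.1} :=
  ⟨⟨abOf y.1 (Nat.find (exists_validCD y.1 y.2.1 y.2.2))
      (Nat.find_spec (exists_validCD y.1 y.2.1 y.2.2)).1,
    zig_lseq_abOf _ _ _ y.2.1 y.2.2 (Nat.find_spec _),
    zig_rseq_abOf _ _ _ y.2.1 y.2.2 (Nat.find_spec _)⟩,
    not_good_of_validAB _ (validAB_abOf_self y.1 _ _ y.2.1 y.2.2)⟩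

lemma cdOf_congr (e : Fin (2*k+1) ⊕ Fin (2*k+1) ≃ Fin (4*k+2)) {J J' : ℕ} (h : J = J')
    (hJ : J ≤ 2*k) (hJ' : J' ≤ 2*k) : cdOf e J hJ = cdOf e J' hJ' := by subst h; rfl

lemma fwd_fst (k : ℕ) (x : {x : ABt k // ¬ Good k x.1}) {J : ℕ}
    (hv : validAB k x.1.1 J) (hmin : ∀ i < J, ¬ validAB k x.1.1 i) :
    (fwd k x).1 = cdOf x.1.1 J hv.1 := by
  have h : Nat.find (exists_validAB x.1.1 x.1.2.1 x.1.2.2 x.2) = J :=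
    (Nat.find_eq_iff _).mpr ⟨hv, hmin⟩
  exact cdOf_congr _ h _ _

lemma bwd_fst (k : ℕ) (y : CDt k) {J : ℕ}
    (hv : validCD k y.1 J) (hmin : ∀ i < J, ¬ validCD k y.1 i) :
    (bwd k y).1.1 = abOf y.1 J hv.1 := by
  have h : Nat.find (exists_validCD y.1 y.2.1 y.2.2) = J :=
    (Nat.find_eq_iff _).mpr ⟨hv, hmin⟩
  exact abOf_congr _ h _ _

/-- the tail-swap involution. -/
noncomputable def badEquiv (k : ℕ) : {x : ABt k // ¬ Good k x.1} ≃ CDt k where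
  toFun := fwd k
  invFun := bwd k
  left_inv x := by
    have hex := exists_validAB x.1.1 x.1.2.1 x.1.2.2 x.2
    have hvJ : validAB k x.1.1 (Nat.find hex) := Nat.find_spec hex
    have hminJ : ∀ i < Nat.find hex, ¬ validAB k x.1.1 i := fun i h => Nat.find_min hex h
    have hfwd : (fwd k x).1 = cdOf x.1.1 (Nat.find hex) hvJ.1 := fwd_fst k x hvJ hminJ
    apply Subtype.ext; apply Subtype.ext
    have hv' : validCD k (fwd k x).1 (Nat.find hex) := by
      rw [hfwd]; exact validCD_cdOf_self x.1.1 _ hvJ.1 x.1.2.1 x.1.2.2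
    have hmin' : ∀ i < Nat.find hex, ¬ validCD k (fwd k x).1 i := by
      intro i hi hv
      rw [hfwd] at hv
      exact hminJ i hi ((validCD_cdOf_of_lt x.1.1 _ hvJ.1 hi).mp hv)
    have := bwd_fst k (fwd k x) hv' hmin'
    rw [this]
    have : abOf (fwd k x).1 (Nat.find hex) hv'.1 = abOf (cdOf x.1.1 (Nat.find hex) hvJ.1)
        (Nat.find hex) hvJ.1 := by
      congr 1
    rw [this]
    exact abOf_cdOf x.1.1 _ hvJ.1
  right_inv y := by
    have hex := exists_validCD y.1 y.2.1 y.2.2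
    have hvJ : validCD k y.1 (Nat.find hex) := Nat.find_spec hex
    have hminJ : ∀ i < Nat.find hex, ¬ validCD k y.1 i := fun i h => Nat.find_min hex h
    have hbwd : (bwd k y).1.1 = abOf y.1 (Nat.find hex) hvJ.1 := bwd_fst k y hvJ hminJ
    apply Subtype.ext
    have hv' : validAB k (bwd k y).1.1 (Nat.find hex) := by
      rw [hbwd]; exact validAB_abOf_self y.1 _ hvJ.1 y.2.1 y.2.2
    have hmin' : ∀ i < Nat.find hex, ¬ validAB k (bwd k y).1.1 i := by
      intro i hi hv
      rw [hbwd] at hv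
      exact hminJ i hi ((validAB_abOf_of_lt y.1 _ hvJ.1 hi).mp hv)
    have h1 : (fwd k (bwd k y)).1 = cdOf (bwd k y).1.1 (Nat.find hex) hv'.1 :=
      fwd_fst k (bwd k y) hv' hmin'
    rw [h1]
    have : cdOf (bwd k y).1.1 (Nat.find hex) hv'.1 = cdOf (abOf y.1 (Nat.find hex) hvJ.1)
        (Nat.find hex) hvJ.1 := by
      congr 1
    rw [this]
    exact cdOf_abOf y.1 _ hvJ.1

end involution

def pseq {m : ℕ} (σ : Equiv.Perm (Fin m)) : ℕ → ℕ :=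
  fun i => if h : i < m then (σ ⟨i, h⟩ : ℕ) else 0

section counting
variable {p q N : ℕ} (hpq : p + q = N)

lemma compl_card (hpq : p + q = N) {S : Finset (Fin N)} (hS : S.card = p) : Sᶜ.card = q := by
  rw [Finset.card_compl, hS]
  simp only [Fintype.card_fin]
  omega

def buildFun (S : Finset (Fin N)) (hS : S.card = p) (hSc : Sᶜ.card = q)
    (σ : Equiv.Perm (Fin p)) (τ : Equiv.Perm (Fin q)) : Fin p ⊕ Fin q → Fin N :=
  Sum.elim (fun i => (S.orderIsoOfFin hS (σ i) : Fin N))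
    (fun j => (Sᶜ.orderIsoOfFin hSc (τ j) : Fin N))

lemma buildFun_injective (S : Finset (Fin N)) (hS : S.card = p) (hSc : Sᶜ.card = q)
    (σ : Equiv.Perm (Fin p)) (τ : Equiv.Perm (Fin q)) :
    Function.Injective (buildFun S hS hSc σ τ) := by
  intro x y hxy
  rcases x with i | i <;> rcases y with j | j <;>
    simp only [buildFun, Sum.elim_inl, Sum.elim_inr] at hxy
  · have := (S.orderIsoOfFin hS).injective (Subtype.ext hxy)
    rw [σ.injective this]
  · exfalso
    have h1 := (S.orderIsoOfFin hS (σ i)).2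
    have h2 := (Sᶜ.orderIsoOfFin hSc (τ j)).2
    rw [hxy] at h1
    simp only [Finset.mem_compl] at h2
    exact h2 h1
  · exfalso
    have h1 := (S.orderIsoOfFin hS (σ j)).2
    have h2 := (Sᶜ.orderIsoOfFin hSc (τ i)).2
    rw [hxy] at h2
    simp only [Finset.mem_compl] at h2
    exact h2 h1
  · have := (Sᶜ.orderIsoOfFin hSc).injective (Subtype.ext hxy)
    rw [τ.injective this]

noncomputable def buildEquiv (S : Finset (Fin N)) (hS : S.card = p) (hSc : Sᶜ.card = q)
    (σ : Equiv.Perm (Fin p)) (τ : Equiv.Perm (Fin q)) : Fin p ⊕ Fin q ≃ Fin N :=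
  Equiv.ofBijective (buildFun S hS hSc σ τ)
    ((Fintype.bijective_iff_injective_and_card _).mpr
      ⟨buildFun_injective S hS hSc σ τ, by simp [hpq]⟩)

/-- the decomposition map. -/
noncomputable def Phi :
    {S : Finset (Fin N) // S.card = p} × Equiv.Perm (Fin p) × Equiv.Perm (Fin q) →
      (Fin p ⊕ Fin q ≃ Fin N) :=
  fun t => buildEquiv hpq t.1.1 t.1.2 (compl_card hpq t.1.2) t.2.1 t.2.2

lemma image_buildFun (S : Finset (Fin N)) (hS : S.card = p) (hSc : Sᶜ.card = q)
    (σ : Equiv.Perm (Fin p)) (τ : Equiv.Perm (Fin q)) :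
    Finset.image (fun i => buildFun S hS hSc σ τ (Sum.inl i)) Finset.univ = S := by
  apply Finset.eq_of_subset_of_card_le
  · intro x hx
    simp only [Finset.mem_image] at hx
    obtain ⟨i, _, rfl⟩ := hx
    exact (S.orderIsoOfFin hS (σ i)).2
  · rw [hS, Finset.card_image_of_injective _
      (fun i j h => by simpa using buildFun_injective S hS hSc σ τ (a₁ := Sum.inl i) (a₂ := Sum.inl j) h)]
    simp

lemma Phi_injective : Function.Injective (Phi hpq (p := p) (q := q)) := by
  rintro ⟨⟨S, hS⟩, σ, τ⟩ ⟨⟨S', hS'⟩, σ', τ'⟩ h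
  have happ : ∀ x, buildFun S hS (compl_card hpq hS) σ τ x = buildFun S' hS' (compl_card hpq hS') σ' τ' x := by
    intro x
    have := congrArg (fun e => (e : Fin p ⊕ Fin q ≃ Fin N) x) h
    simpa [Phi, buildEquiv] using this
  have hSS : S = S' := by
    rw [← image_buildFun S hS (compl_card hpq hS) σ τ, ← image_buildFun S' hS' (compl_card hpq hS') σ' τ']
    apply Finset.image_congr
    intro i _
    exact happ (Sum.inl i)
  subst hSS
  have hσ : σ = σ' := by
    apply Equiv.ext
    intro i
    have := happ (Sum.inl i)
    simp only [buildFun, Sum.elim_inl] at this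
    exact (S.orderIsoOfFin hS).injective (Subtype.ext this)
  have hτ : τ = τ' := by
    apply Equiv.ext
    intro i
    have := happ (Sum.inr i)
    simp only [buildFun, Sum.elim_inr] at this
    exact (Sᶜ.orderIsoOfFin (compl_card hpq hS)).injective (Subtype.ext this)
  simp [hσ, hτ]

lemma Phi_surjective : Function.Surjective (Phi hpq (p := p) (q := q)) := by
  intro e
  set S : Finset (Fin N) := Finset.image (fun i => e (Sum.inl i)) Finset.univ with hSdef
  have hS : S.card = p := by
    rw [hSdef, Finset.card_image_of_injective _ (fun i j h => by
      simpa using e.injective h)]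
    simp
  have hmeml : ∀ i, e (Sum.inl i) ∈ S := by
    intro i; rw [hSdef]; exact Finset.mem_image_of_mem _ (Finset.mem_univ i)
  have hmemr : ∀ j, e (Sum.inr j) ∈ Sᶜ := by
    intro j
    rw [Finset.mem_compl, hSdef]
    simp only [Finset.mem_image, Finset.mem_univ, true_and]
    rintro ⟨i, hi⟩
    exact absurd (e.injective hi) (by simp)
  set σf : Fin p → Fin p := fun i => (S.orderIsoOfFin hS).symm ⟨e (Sum.inl i), hmeml i⟩ with hσf
  have hσinj : Function.Injective σf := by
    intro i j h
    rw [hσf] at h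
    have h2 := (S.orderIsoOfFin hS).symm.injective h
    have h3 : e (Sum.inl i) = e (Sum.inl j) := congrArg Subtype.val h2
    simpa using e.injective h3
  set τf : Fin q → Fin q := fun j => (Sᶜ.orderIsoOfFin (compl_card hpq hS)).symm
    ⟨e (Sum.inr j), hmemr j⟩ with hτf
  have hτinj : Function.Injective τf := by
    intro i j h
    rw [hτf] at h
    have h2 := (Sᶜ.orderIsoOfFin (compl_card hpq hS)).symm.injective h
    have h3 : e (Sum.inr i) = e (Sum.inr j) := congrArg Subtype.val h2
    simpa using e.injective h3
  refine ⟨⟨⟨S, hS⟩, Equiv.ofBijective σf (Finite.injective_iff_bijective.mp hσinj),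
    Equiv.ofBijective τf (Finite.injective_iff_bijective.mp hτinj)⟩, ?_⟩
  apply Equiv.ext
  intro x
  show buildFun S hS (compl_card hpq hS) _ _ x = e x
  rcases x with i | i
  · simp only [buildFun, Sum.elim_inl, Equiv.ofBijective_apply, hσf]
    rw [OrderIso.apply_symm_apply]
  · simp only [buildFun, Sum.elim_inr, Equiv.ofBijective_apply, hτf]
    rw [OrderIso.apply_symm_apply]

lemma lseq_Phi (t : {S : Finset (Fin N) // S.card = p} × Equiv.Perm (Fin p) × Equiv.Perm (Fin q))
    {i : ℕ} (hi : i < p) :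
    lseq (Phi hpq t) i = ((t.1.1.orderIsoOfFin t.1.2 (t.2.1 ⟨i, hi⟩) : Fin N) : ℕ) := by
  simp only [lseq, dif_pos hi, Phi, buildEquiv, Equiv.ofBijective_apply, buildFun, Sum.elim_inl]

lemma rseq_Phi (t : {S : Finset (Fin N) // S.card = p} × Equiv.Perm (Fin p) × Equiv.Perm (Fin q))
    {i : ℕ} (hi : i < q) :
    rseq (Phi hpq t) i = (((t.1.1ᶜ).orderIsoOfFin (compl_card hpq t.1.2) (t.2.2 ⟨i, hi⟩) : Fin N) : ℕ) := by
  simp only [rseq, dif_pos hi, Phi, buildEquiv, Equiv.ofBijective_apply, buildFun, Sum.elim_inr]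

lemma zig_lseq_Phi (t : {S : Finset (Fin N) // S.card = p} × Equiv.Perm (Fin p) × Equiv.Perm (Fin q))
    (par : ℕ) : Zig p par (lseq (Phi hpq t)) ↔ Zig p par (pseq t.2.1) := by
  unfold Zig
  refine forall_congr' fun i => forall_congr' fun hi => iff_congr ?_ Iff.rfl
  rw [lseq_Phi hpq t (by omega), lseq_Phi hpq t hi]
  simp only [pseq, dif_pos (show i < p by omega), dif_pos hi]
  have hmono : ∀ a b : Fin p, ((t.1.1.orderIsoOfFin t.1.2 a : Fin N) : ℕ) <
      ((t.1.1.orderIsoOfFin t.1.2 b : Fin N) : ℕ) ↔ (a : ℕ) < (b : ℕ) := by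
    intro a b
    rw [← Fin.lt_def]
    constructor
    · intro h
      have : t.1.1.orderIsoOfFin t.1.2 a < t.1.1.orderIsoOfFin t.1.2 b := h
      exact (t.1.1.orderIsoOfFin t.1.2).lt_iff_lt.mp this
    · intro h
      exact (t.1.1.orderIsoOfFin t.1.2).lt_iff_lt.mpr h
  exact hmono _ _

lemma zig_rseq_Phi (t : {S : Finset (Fin N) // S.card = p} × Equiv.Perm (Fin p) × Equiv.Perm (Fin q))
    (par : ℕ) : Zig q par (rseq (Phi hpq t)) ↔ Zig q par (pseq t.2.2) := by
  unfold Zig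
  refine forall_congr' fun i => forall_congr' fun hi => iff_congr ?_ Iff.rfl
  rw [rseq_Phi hpq t (by omega), rseq_Phi hpq t hi]
  simp only [pseq, dif_pos (show i < q by omega), dif_pos hi]
  have hmono : ∀ a b : Fin q, (((t.1.1ᶜ).orderIsoOfFin (compl_card hpq t.1.2) a : Fin N) : ℕ) <
      (((t.1.1ᶜ).orderIsoOfFin (compl_card hpq t.1.2) b : Fin N) : ℕ) ↔ (a : ℕ) < (b : ℕ) := by
    intro a b
    rw [← Fin.lt_def]
    constructor
    · intro h
      have : (t.1.1ᶜ).orderIsoOfFin (compl_card hpq t.1.2) a <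
          (t.1.1ᶜ).orderIsoOfFin (compl_card hpq t.1.2) b := h
      exact ((t.1.1ᶜ).orderIsoOfFin (compl_card hpq t.1.2)).lt_iff_lt.mp this
    · intro h
      exact ((t.1.1ᶜ).orderIsoOfFin (compl_card hpq t.1.2)).lt_iff_lt.mpr h
  exact hmono _ _

/-- splitting a subtype of a triple product. -/
def prodSplit {A B C : Type*} (P : B → Prop) (Q : C → Prop) :
    {t : A × B × C // P t.2.1 ∧ Q t.2.2} ≃ A × {b // P b} × {c // Q c} where
  toFun t := (t.1.1, ⟨t.1.2.1, t.2.1⟩, ⟨t.1.2.2, t.2.2⟩)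
  invFun x := ⟨(x.1, x.2.1.1, x.2.2.1), x.2.1.2, x.2.2.2⟩
  left_inv t := rfl
  right_inv x := rfl

/-- the master counting lemma. -/
lemma card_config (hpq : p + q = N) (par1 par2 : ℕ) :
    Nat.card {e : Fin p ⊕ Fin q ≃ Fin N // Zig p par1 (lseq e) ∧ Zig q par2 (rseq e)} =
      N.choose p * Nat.card {σ : Equiv.Perm (Fin p) // Zig p par1 (pseq σ)} *
        Nat.card {τ : Equiv.Perm (Fin q) // Zig q par2 (pseq τ)} := by
  have hbij : Function.Bijective (Phi hpq (p := p) (q := q)) :=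
    ⟨Phi_injective hpq, Phi_surjective hpq⟩
  have e1 : {t : {S : Finset (Fin N) // S.card = p} × Equiv.Perm (Fin p) × Equiv.Perm (Fin q) //
      Zig p par1 (pseq t.2.1) ∧ Zig q par2 (pseq t.2.2)} ≃
      {e : Fin p ⊕ Fin q ≃ Fin N // Zig p par1 (lseq e) ∧ Zig q par2 (rseq e)} :=
    Equiv.subtypeEquiv (Equiv.ofBijective _ hbij) (fun t => by
      rw [Equiv.ofBijective_apply]
      exact and_congr (zig_lseq_Phi hpq t par1).symm (zig_rseq_Phi hpq t par2).symm)
  rw [← Nat.card_congr e1, Nat.card_congr (prodSplit (fun σ : Equiv.Perm (Fin p) => Zig p par1 (pseq σ)) (fun τ : Equiv.Perm (Fin q) => Zig q par2 (pseq τ))), Nat.card_prod, Nat.card_prod]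
  rw [Nat.card_eq_fintype_card (α := {S : Finset (Fin N) // S.card = p})]
  rw [Fintype.card_finset_len, Fintype.card_fin, mul_assoc]

end counting
section permcount
variable {m : ℕ}

lemma card_zig_up (m : ℕ) :
    Nat.card {σ : Equiv.Perm (Fin m) // Zig m 0 (pseq σ)} = updownCount m := by
  unfold updownCount
  apply Nat.card_congr
  apply Equiv.subtypeEquivRight
  intro σ
  constructor
  · intro hz i h
    have := hz i (by omega)
    simp only [pseq, dif_pos (show (i:ℕ) < m by omega), dif_pos h, Fin.eta] at this
    by_cases hpar : (i:ℕ) % 2 = 0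
    · rw [if_pos hpar]
      exact this.mpr hpar
    · rw [if_neg hpar]
      have hne : σ i ≠ σ ⟨(i:ℕ)+1, h⟩ := fun hc => by
        have := σ.injective hc
        simp only [Fin.ext_iff] at this
        omega
      have h2 : ¬ ((σ i : ℕ) < (σ ⟨(i:ℕ)+1, h⟩ : ℕ)) := fun hc => hpar (this.mp hc)
      have h3 : (σ i : ℕ) ≠ (σ ⟨(i:ℕ)+1, h⟩ : ℕ) := fun hc => hne (Fin.ext hc)
      exact Fin.lt_def.mpr (by omega)
  · intro hz i hi
    have := hz ⟨i, by omega⟩ (by simpa using hi)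
    simp only [pseq, dif_pos (show i < m by omega), dif_pos hi]
    by_cases hpar : i % 2 = 0
    · rw [if_pos hpar] at this
      constructor
      · intro _; exact hpar
      · intro _; exact this
    · rw [if_neg hpar] at this
      constructor
      · intro hc
        exfalso
        have := Fin.lt_def.mp this
        simp only [Fin.val_mk] at this hc ⊢
        omega
      · intro hc; omega

/-- reversal equivalence: composing with `Fin.revPerm` flips the zigzag parity. -/
lemma card_zig_down (m : ℕ) :
    Nat.card {σ : Equiv.Perm (Fin m) // Zig m 1 (pseq σ)} =
      Nat.card {σ : Equiv.Perm (Fin m) // Zig m 0 (pseq σ)} := by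
  apply Nat.card_congr
  have key : ∀ σ : Equiv.Perm (Fin m), ∀ par : ℕ, par ≤ 1 → Zig m par (pseq σ) →
      Zig m (1 - par) (pseq (σ.trans Fin.revPerm)) := by
    intro σ par hpar hz i hi
    have h1 := hz i hi
    simp only [pseq, dif_pos (show i < m by omega), dif_pos hi, Equiv.trans_apply,
      Fin.revPerm_apply, Fin.val_rev] at h1 ⊢
    have b1 : (σ ⟨i, by omega⟩ : ℕ) < m := (σ _).2
    have b2 : (σ ⟨i+1, hi⟩ : ℕ) < m := (σ _).2
    have hne : (σ ⟨i, by omega⟩ : ℕ) ≠ (σ ⟨i+1, hi⟩ : ℕ) := by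
      intro hc
      have := σ.injective (Fin.ext hc)
      simp only [Fin.ext_iff] at this
      omega
    omega
  refine ⟨fun σ => ⟨σ.1.trans Fin.revPerm, by simpa using key σ.1 1 le_rfl σ.2⟩,
    fun σ => ⟨σ.1.trans Fin.revPerm, by simpa using key σ.1 0 (by omega) σ.2⟩, ?_, ?_⟩
  · intro σ
    apply Subtype.ext
    apply Equiv.ext
    intro x
    simp
  · intro σ
    apply Subtype.ext
    apply Equiv.ext
    intro x
    simp

end permcount

section geometry
variable (k : ℕ)

/-- the diagram: 4-strip with `k+1` columns, two corners removed. -/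
noncomputable def Dk : Finset (ℤ × ℤ) :=
  ((strip 4 (k+1)).erase (1, (k : ℤ) + 1)).erase ((k : ℤ) + 4, 1)

lemma mem_Dk (rc : ℤ × ℤ) :
    rc ∈ Dk k ↔ 1 ≤ rc.2 ∧ rc.2 ≤ (k : ℤ) + 1 ∧ (k : ℤ) + 2 - rc.2 ≤ rc.1 ∧
      rc.1 ≤ (k : ℤ) + 5 - rc.2 ∧ ¬(rc.1 = 1 ∧ rc.2 = (k : ℤ) + 1) ∧
      ¬(rc.1 = (k : ℤ) + 4 ∧ rc.2 = 1) := by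
  simp only [Dk, strip, Finset.mem_erase, Finset.mem_filter, Finset.mem_product,
    Finset.mem_Icc, ne_eq, Prod.ext_iff, Nat.cast_add, Nat.cast_one, Nat.cast_ofNat]
  push_cast
  omega

/-- cell of the top ribbon, `0`-indexed position `K`. -/
def qcell (K : ℕ) : ℤ × ℤ := ((k : ℤ) + 2 - (K/2 : ℕ) - (K%2 : ℕ), ((K/2 : ℕ) : ℤ) + 1)

/-- cell of the bottom ribbon. -/
def scell (K : ℕ) : ℤ × ℤ := ((k : ℤ) + 3 - (K/2 : ℕ), ((K/2 : ℕ) : ℤ) + 1 + (K%2 : ℕ))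

lemma qcell_mem {K : ℕ} (hK : K < 2*k+1) : qcell k K ∈ Dk k := by
  rw [mem_Dk]
  simp only [qcell]
  refine ⟨by push_cast; omega, by push_cast; omega, by push_cast; omega, by push_cast; omega,
    by push_cast; omega, by push_cast; omega⟩

lemma scell_mem {K : ℕ} (hK : K < 2*k+1) : scell k K ∈ Dk k := by
  rw [mem_Dk]
  simp only [scell]
  refine ⟨by push_cast; omega, by push_cast; omega, by push_cast; omega, by push_cast; omega,
    by push_cast; omega, by push_cast; omega⟩

def cellmap : Fin (2*k+1) ⊕ Fin (2*k+1) → {c : ℤ × ℤ // c ∈ Dk k} :=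
  Sum.elim (fun K => ⟨qcell k K, qcell_mem k K.2⟩) (fun K => ⟨scell k K, scell_mem k K.2⟩)

lemma cellmap_injective : Function.Injective (cellmap k) := by
  intro x y hxy
  have h := congrArg Subtype.val hxy
  rcases x with i | i <;> rcases y with j | j <;>
    simp only [cellmap, Sum.elim_inl, Sum.elim_inr, qcell, scell, Prod.ext_iff] at h ⊢
  · congr 1
    apply Fin.ext
    obtain ⟨h1, h2⟩ := h
    push_cast at h1 h2
    omega
  · exfalso
    obtain ⟨h1, h2⟩ := h
    push_cast at h1 h2
    omega
  · exfalso
    obtain ⟨h1, h2⟩ := h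
    push_cast at h1 h2
    omega
  · congr 1
    apply Fin.ext
    obtain ⟨h1, h2⟩ := h
    push_cast at h1 h2
    omega

lemma cellmap_surjective : Function.Surjective (cellmap k) := by
  rintro ⟨⟨r, c⟩, hmem⟩
  rw [mem_Dk] at hmem
  obtain ⟨hc1, hc2, hr1, hr2, hcor1, hcor2⟩ := hmem
  -- c is a positive integer
  obtain ⟨c', rfl⟩ : ∃ c' : ℕ, c = (c' : ℤ) := ⟨c.toNat, by omega⟩
  have hc'1 : 1 ≤ c' := by omega
  have hc'2 : c' ≤ k + 1 := by omega
  -- the diagonal index u = r + c - (k+1) ∈ {1,2,3,4}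
  have hu : r + c' - (k+1) = 1 ∨ r + c' - (k+1) = 2 ∨ r + c' - (k+1) = 3 ∨
      r + c' - (k+1) = 4 := by omega
  rcases hu with hu | hu | hu | hu
  · -- u = 1 : top cell, qcell (2c'-1), needs c' ≤ k
    have hck : c' ≤ k := by omega
    refine ⟨Sum.inl ⟨2*c'-1, by omega⟩, ?_⟩
    simp only [cellmap, Sum.elim_inl]
    apply Subtype.ext
    simp only [qcell, Prod.ext_iff]
    constructor <;> push_cast <;> omega
  · refine ⟨Sum.inl ⟨2*c'-2, by omega⟩, ?_⟩
    simp only [cellmap, Sum.elim_inl]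
    apply Subtype.ext
    simp only [qcell, Prod.ext_iff]
    constructor <;> push_cast <;> omega
  · refine ⟨Sum.inr ⟨2*c'-2, by omega⟩, ?_⟩
    simp only [cellmap, Sum.elim_inr]
    apply Subtype.ext
    simp only [scell, Prod.ext_iff]
    constructor <;> push_cast <;> omega
  · -- u = 4 : bottom cell, scell (2c'-3), needs c' ≥ 2
    have hc2' : 2 ≤ c' := by omega
    refine ⟨Sum.inr ⟨2*c'-3, by omega⟩, ?_⟩
    simp only [cellmap, Sum.elim_inr]
    apply Subtype.ext
    simp only [scell, Prod.ext_iff]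
    constructor <;> push_cast <;> omega

noncomputable def cellEquiv : (Fin (2*k+1) ⊕ Fin (2*k+1)) ≃ {c : ℤ × ℤ // c ∈ Dk k} :=
  Equiv.ofBijective (cellmap k) ⟨cellmap_injective k, cellmap_surjective k⟩

lemma card_Dk : (Dk k).card = 4*k+2 := by
  have h1 : Fintype.card {c : ℤ × ℤ // c ∈ Dk k} = (Dk k).card := Fintype.card_coe _
  have h2 := Fintype.card_congr (cellEquiv k).symm
  simp only [Fintype.card_sum, Fintype.card_fin] at h2
  omega

end geometry

section sytcond
variable (k : ℕ)

noncomputable def Bmap : ({c : ℤ × ℤ // c ∈ Dk k} ≃ Fin ((Dk k).card)) ≃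
    (Fin (2*k+1) ⊕ Fin (2*k+1) ≃ Fin (4*k+2)) :=
  Equiv.equivCongr (cellEquiv k).symm (finCongr (card_Dk k))

variable {k}
variable (f : {c : ℤ × ℤ // c ∈ Dk k} ≃ Fin ((Dk k).card))

/-- value of the tableau at a cell (0 outside). -/
noncomputable def Fv (rc : ℤ × ℤ) : ℕ :=
  if h : rc ∈ Dk k then (f ⟨rc, h⟩ : ℕ) else 0

lemma Fv_ne {x y : ℤ × ℤ} (hx : x ∈ Dk k) (hy : y ∈ Dk k) (hxy : x ≠ y) :
    Fv f x ≠ Fv f y := by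
  simp only [Fv, dif_pos hx, dif_pos hy]
  intro h
  exact hxy (congrArg Subtype.val (f.injective (Fin.val_injective h)))

lemma lseq_Bmap {K : ℕ} (hK : K < 2*k+1) : lseq (Bmap k f) K = Fv f (qcell k K) := by
  simp only [lseq, dif_pos hK, Bmap, Equiv.equivCongr_apply_apply, Equiv.symm_symm,
    cellEquiv, Equiv.ofBijective_apply, cellmap, Sum.elim_inl, Fv,
    dif_pos (qcell_mem k hK), finCongr_apply, Fin.coe_cast]

lemma rseq_Bmap {K : ℕ} (hK : K < 2*k+1) : rseq (Bmap k f) K = Fv f (scell k K) := by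
  simp only [rseq, dif_pos hK, Bmap, Equiv.equivCongr_apply_apply, Equiv.symm_symm,
    cellEquiv, Equiv.ofBijective_apply, cellmap, Sum.elim_inr, Fv,
    dif_pos (scell_mem k hK), finCongr_apply, Fin.coe_cast]

def SytCond (f : {c : ℤ × ℤ // c ∈ Dk k} ≃ Fin ((Dk k).card)) : Prop :=
  ∀ a b : {c : ℤ × ℤ // c ∈ Dk k},
    ((a.1.1 = b.1.1 ∧ a.1.2 < b.1.2) ∨ (a.1.2 = b.1.2 ∧ a.1.1 < b.1.1)) → f a < f b

lemma syt_apply {x y : ℤ × ℤ} (hs : SytCond f) (hx : x ∈ Dk k) (hy : y ∈ Dk k)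
    (hrel : (x.1 = y.1 ∧ x.2 < y.2) ∨ (x.2 = y.2 ∧ x.1 < y.1)) : Fv f x < Fv f y := by
  simp only [Fv, dif_pos hx, dif_pos hy]
  exact hs ⟨x, hx⟩ ⟨y, hy⟩ hrel

/-- forward: tableau conditions give the zigzag patterns. -/
lemma zig_of_syt (hs : SytCond f) :
    (Zig (2*k+1) 1 (lseq (Bmap k f)) ∧ Zig (2*k+1) 0 (rseq (Bmap k f))) ∧
      Good k (Bmap k f) := by
  refine ⟨⟨?_, ?_⟩, ?_⟩
  · intro i hi
    rw [lseq_Bmap f (by omega), lseq_Bmap f hi]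
    by_cases hpar : i % 2 = 1
    · have := syt_apply f hs (qcell_mem k (show i < 2*k+1 by omega)) (qcell_mem k hi)
        (Or.inl ⟨by simp only [qcell]; push_cast; omega, by simp only [qcell]; push_cast; omega⟩)
      omega
    · have := syt_apply f hs (qcell_mem k hi) (qcell_mem k (show i < 2*k+1 by omega))
        (Or.inr ⟨by simp only [qcell]; push_cast; omega, by simp only [qcell]; push_cast; omega⟩)
      omega
  · intro i hi
    rw [rseq_Bmap f (by omega), rseq_Bmap f hi]
    by_cases hpar : i % 2 = 0
    · have := syt_apply f hs (scell_mem k (show i < 2*k+1 by omega)) (scell_mem k hi)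
        (Or.inl ⟨by simp only [scell]; push_cast; omega, by simp only [scell]; push_cast; omega⟩)
      omega
    · have := syt_apply f hs (scell_mem k hi) (scell_mem k (show i < 2*k+1 by omega))
        (Or.inr ⟨by simp only [scell]; push_cast; omega, by simp only [scell]; push_cast; omega⟩)
      omega
  · intro i hpar
    constructor
    · intro hi
      rw [lseq_Bmap f hi, rseq_Bmap f hi]
      exact syt_apply f hs (qcell_mem k hi) (scell_mem k hi)
        (Or.inr ⟨by simp only [qcell, scell]; push_cast; omega,
          by simp only [qcell, scell]; push_cast; omega⟩)
    · intro hi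
      rw [lseq_Bmap f (by omega), rseq_Bmap f hi]
      exact syt_apply f hs (qcell_mem k (by omega)) (scell_mem k hi)
        (Or.inl ⟨by simp only [qcell, scell]; push_cast; omega,
          by simp only [qcell, scell]; push_cast; omega⟩)

lemma betw_row {r c1 c c2 : ℤ} (h1 : (r, c1) ∈ Dk k) (h2 : (r, c2) ∈ Dk k)
    (ha : c1 < c) (hb : c < c2) : (r, c) ∈ Dk k := by
  rw [mem_Dk] at *
  simp only at *
  omega

lemma betw_col {r1 r r2 c : ℤ} (h1 : (r1, c) ∈ Dk k) (h2 : (r2, c) ∈ Dk k)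
    (ha : r1 < r) (hb : r < r2) : (r, c) ∈ Dk k := by
  rw [mem_Dk] at *
  simp only at *
  omega

section backward
variable (hZa : Zig (2*k+1) 1 (lseq (Bmap k f))) (hZb : Zig (2*k+1) 0 (rseq (Bmap k f)))
variable (hG : Good k (Bmap k f))
include hZa hZb hG

/-- backward: adjacent cells in a row. -/
lemma adj_row {r c : ℤ} (h1 : (r, c) ∈ Dk k) (h2 : (r, c+1) ∈ Dk k) :
    Fv f (r, c) < Fv f (r, c+1) := by
  have hm1 := (mem_Dk k _).mp h1
  have hm2 := (mem_Dk k _).mp h2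
  simp only at hm1 hm2
  obtain ⟨c', rfl⟩ : ∃ c' : ℕ, c = (c' : ℤ) := ⟨c.toNat, by omega⟩
  have hu : r + c' - (k+1) = 1 ∨ r + c' - (k+1) = 2 ∨ r + c' - (k+1) = 3 := by omega
  rcases hu with hu | hu | hu
  · have hck : c' ≤ k := by omega
    have hq1 : (r, (c' : ℤ)) = qcell k (2*c'-1) := by
      simp only [qcell, Prod.ext_iff]; constructor <;> push_cast <;> omega
    have hq2 : ((r, (c' : ℤ)+1) : ℤ × ℤ) = qcell k (2*c') := by
      simp only [qcell, Prod.ext_iff]; constructor <;> push_cast <;> omega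
    rw [hq1, hq2]
    have hz := hZa (2*c'-1) (by omega)
    rw [lseq_Bmap f (by omega), lseq_Bmap f (by omega),
      show 2*c'-1+1 = 2*c' by omega] at hz
    omega
  · have hck : c' ≤ k := by omega
    have hq1 : (r, (c' : ℤ)) = qcell k (2*c'-2) := by
      simp only [qcell, Prod.ext_iff]; constructor <;> push_cast <;> omega
    have hq2 : ((r, (c' : ℤ)+1) : ℤ × ℤ) = scell k (2*c') := by
      simp only [scell, Prod.ext_iff]; constructor <;> push_cast <;> omega
    rw [hq1, hq2]
    have hg := (hG (2*c'-2) (by omega)).2 (by omega)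
    rw [lseq_Bmap f (by omega), rseq_Bmap f (by omega),
      show 2*c'-2+2 = 2*c' by omega] at hg
    exact hg
  · have hck : c' ≤ k := by omega
    have hq1 : (r, (c' : ℤ)) = scell k (2*c'-2) := by
      simp only [scell, Prod.ext_iff]; constructor <;> push_cast <;> omega
    have hq2 : ((r, (c' : ℤ)+1) : ℤ × ℤ) = scell k (2*c'-1) := by
      simp only [scell, Prod.ext_iff]; constructor <;> push_cast <;> omega
    rw [hq1, hq2]
    have hz := hZb (2*c'-2) (by omega)
    rw [rseq_Bmap f (by omega), rseq_Bmap f (by omega),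
      show 2*c'-2+1 = 2*c'-1 by omega] at hz
    omega

/-- backward: adjacent cells in a column. -/
lemma adj_col {r c : ℤ} (h1 : (r, c) ∈ Dk k) (h2 : (r+1, c) ∈ Dk k) :
    Fv f (r, c) < Fv f (r+1, c) := by
  have hm1 := (mem_Dk k _).mp h1
  have hm2 := (mem_Dk k _).mp h2
  simp only at hm1 hm2
  obtain ⟨c', rfl⟩ : ∃ c' : ℕ, c = (c' : ℤ) := ⟨c.toNat, by omega⟩
  have hu : r + c' - (k+1) = 1 ∨ r + c' - (k+1) = 2 ∨ r + c' - (k+1) = 3 := by omega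
  rcases hu with hu | hu | hu
  · have hq1 : (r, (c' : ℤ)) = qcell k (2*c'-1) := by
      simp only [qcell, Prod.ext_iff]; constructor <;> push_cast <;> omega
    have hq2 : ((r+1, (c' : ℤ)) : ℤ × ℤ) = qcell k (2*c'-2) := by
      simp only [qcell, Prod.ext_iff]; constructor <;> push_cast <;> omega
    rw [hq1, hq2]
    have hz := hZa (2*c'-2) (by omega)
    rw [lseq_Bmap f (by omega), lseq_Bmap f (by omega),
      show 2*c'-2+1 = 2*c'-1 by omega] at hz
    have hne := Fv_ne f (qcell_mem k (show 2*c'-2 < 2*k+1 by omega))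
      (qcell_mem k (show 2*c'-1 < 2*k+1 by omega)) (by
        simp only [qcell, ne_eq, Prod.ext_iff, not_and]
        intro hh; push_cast at hh ⊢; omega)
    omega
  · have hq1 : (r, (c' : ℤ)) = qcell k (2*c'-2) := by
      simp only [qcell, Prod.ext_iff]; constructor <;> push_cast <;> omega
    have hq2 : ((r+1, (c' : ℤ)) : ℤ × ℤ) = scell k (2*c'-2) := by
      simp only [scell, Prod.ext_iff]; constructor <;> push_cast <;> omega
    rw [hq1, hq2]
    have hg := (hG (2*c'-2) (by omega)).1 (by omega)
    rw [lseq_Bmap f (by omega), rseq_Bmap f (by omega)] at hg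
    exact hg
  · have hc2 : 2 ≤ c' := by omega
    have hq1 : (r, (c' : ℤ)) = scell k (2*c'-2) := by
      simp only [scell, Prod.ext_iff]; constructor <;> push_cast <;> omega
    have hq2 : ((r+1, (c' : ℤ)) : ℤ × ℤ) = scell k (2*c'-3) := by
      simp only [scell, Prod.ext_iff]; constructor <;> push_cast <;> omega
    rw [hq1, hq2]
    have hz := hZb (2*c'-3) (by omega)
    rw [rseq_Bmap f (by omega), rseq_Bmap f (by omega),
      show 2*c'-3+1 = 2*c'-2 by omega] at hz
    have hne := Fv_ne f (scell_mem k (show 2*c'-2 < 2*k+1 by omega))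
      (scell_mem k (show 2*c'-3 < 2*k+1 by omega)) (by
        simp only [scell, ne_eq, Prod.ext_iff, not_and]
        intro hh; push_cast at hh ⊢; omega)
    omega


lemma row_chain : ∀ d : ℕ, ∀ r c1 c2 : ℤ, (r, c1) ∈ Dk k → (r, c2) ∈ Dk k →
    c1 < c2 → c2 - c1 ≤ (d : ℤ) → Fv f (r, c1) < Fv f (r, c2) := by
  intro d
  induction d with
  | zero => intro r c1 c2 _ _ h hd; omega
  | succ d ih =>
    intro r c1 c2 h1 h2 hlt hd
    by_cases hadj : c2 = c1 + 1
    · subst hadj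
      exact adj_row f hZa hZb hG h1 h2
    · have hmid : (r, c1 + 1) ∈ Dk k := betw_row h1 h2 (by omega) (by omega)
      exact lt_trans (adj_row f hZa hZb hG h1 hmid) (ih r (c1+1) c2 hmid h2 (by omega) (by omega))

lemma col_chain : ∀ d : ℕ, ∀ r1 r2 c : ℤ, (r1, c) ∈ Dk k → (r2, c) ∈ Dk k →
    r1 < r2 → r2 - r1 ≤ (d : ℤ) → Fv f (r1, c) < Fv f (r2, c) := by
  intro d
  induction d with
  | zero => intro r1 r2 c _ _ h hd; omega
  | succ d ih =>
    intro r1 r2 c h1 h2 hlt hd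
    by_cases hadj : r2 = r1 + 1
    · subst hadj
      exact adj_col f hZa hZb hG h1 h2
    · have hmid : (r1 + 1, c) ∈ Dk k := betw_col h1 h2 (by omega) (by omega)
      exact lt_trans (adj_col f hZa hZb hG h1 hmid) (ih (r1+1) r2 c hmid h2 (by omega) (by omega))

lemma syt_of_zig : SytCond f := by
  intro a b hrel
  have ha := a.2
  have hb := b.2
  have key : Fv f a.1 < Fv f b.1 := by
    rcases hrel with ⟨heq, hlt⟩ | ⟨heq, hlt⟩
    · have h1 : a.1 = (a.1.1, a.1.2) := rfl
      have h2 : b.1 = (a.1.1, b.1.2) := by rw [heq]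
      rw [h1, h2]
      exact row_chain f hZa hZb hG (b.1.2 - a.1.2).toNat a.1.1 a.1.2 b.1.2
        (h1 ▸ ha) (h2 ▸ hb) hlt (by omega)
    · have h1 : a.1 = (a.1.1, a.1.2) := rfl
      have h2 : b.1 = (b.1.1, a.1.2) := by rw [heq]
      rw [h1, h2]
      exact col_chain f hZa hZb hG (b.1.1 - a.1.1).toNat a.1.1 b.1.1 a.1.2
        (h1 ▸ ha) (h2 ▸ hb) hlt (by omega)
  simp only [Fv, dif_pos a.2, dif_pos b.2] at key
  rw [Fin.lt_def]
  convert key <;> exact congrArg (fun x => ((f x : Fin _) : ℕ)) (Subtype.ext rfl)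

end backward

/-- the master correspondence for the tableau count. -/
lemma card_syt_eq :
    Nat.card {f : {c : ℤ × ℤ // c ∈ Dk k} ≃ Fin ((Dk k).card) // SytCond f} =
      Nat.card {e : Fin (2*k+1) ⊕ Fin (2*k+1) ≃ Fin (4*k+2) //
        (Zig (2*k+1) 1 (lseq e) ∧ Zig (2*k+1) 0 (rseq e)) ∧ Good k e} := by
  apply Nat.card_congr
  apply Equiv.subtypeEquiv (Bmap k)
  intro f
  constructor
  · intro hs
    obtain ⟨⟨h1, h2⟩, h3⟩ := zig_of_syt f hs
    exact ⟨⟨h1, h2⟩, h3⟩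
  · rintro ⟨⟨h1, h2⟩, h3⟩
    exact syt_of_zig f h1 h2 h3

end sytcond


section final
variable (k : ℕ)

lemma card_ABt : Nat.card (ABt k) =
    (4*k+2).choose (2*k+1) * updownCount (2*k+1) * updownCount (2*k+1) := by
  have h := card_config (p := 2*k+1) (q := 2*k+1) (N := 4*k+2) (by omega) 1 0
  rw [card_zig_down, card_zig_up] at h
  exact h

lemma card_CDt : Nat.card (CDt k) =
    (4*k+2).choose (2*k+2) * updownCount (2*k+2) * updownCount (2*k) := by
  have h := card_config (p := 2*k+2) (q := 2*k) (N := 4*k+2) (by omega) 0 1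
  rw [card_zig_down, card_zig_up, card_zig_up] at h
  exact h

lemma card_good_add :
    Nat.card {e : Fin (2*k+1) ⊕ Fin (2*k+1) ≃ Fin (4*k+2) //
        (Zig (2*k+1) 1 (lseq e) ∧ Zig (2*k+1) 0 (rseq e)) ∧ Good k e} +
      Nat.card (CDt k) = Nat.card (ABt k) := by
  classical
  rw [← Nat.card_congr (Equiv.subtypeSubtypeEquivSubtypeInter
    (fun e : Fin (2*k+1) ⊕ Fin (2*k+1) ≃ Fin (4*k+2) =>
      Zig (2*k+1) 1 (lseq e) ∧ Zig (2*k+1) 0 (rseq e)) (fun e => Good k e)),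
    ← Nat.card_congr (badEquiv k), ← Nat.card_sum]
  exact Nat.card_congr (Equiv.sumCompl fun x : ABt k => Good k x.1)

lemma sytCount_Dk : sytCount (Dk k) =
    Nat.card {e : Fin (2*k+1) ⊕ Fin (2*k+1) ≃ Fin (4*k+2) //
      (Zig (2*k+1) 1 (lseq e) ∧ Zig (2*k+1) 0 (rseq e)) ∧ Good k e} := by
  have h1 : sytCount (Dk k) =
      Nat.card {f : {c : ℤ × ℤ // c ∈ Dk k} ≃ Fin ((Dk k).card) // SytCond f} := rfl
  rw [h1, card_syt_eq]

end final
end SytStrip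

theorem syt_fourStrip_bothCornersRemoved (n : ℕ) (hn : 1 ≤ n) :
    (sytCount (((strip 4 n).erase (1, (n : ℤ))).erase ((n : ℤ) + 3, 1)) : ℚ) =
      (Nat.factorial (4 * n - 2) : ℚ) *
        ((updownCount (2 * n - 1) : ℚ) ^ 2 / ((Nat.factorial (2 * n - 1) : ℚ)) ^ 2 -
          (updownCount (2 * n - 2) : ℚ) * (updownCount (2 * n) : ℚ) /
            ((Nat.factorial (2 * n - 2) : ℚ) * (Nat.factorial (2 * n) : ℚ))) := by
  obtain ⟨k, rfl⟩ : ∃ k, n = k + 1 := ⟨n - 1, by omega⟩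
  have hD : ((strip 4 (k+1)).erase (1, ((k+1 : ℕ) : ℤ))).erase (((k+1 : ℕ) : ℤ) + 3, 1) =
      SytStrip.Dk k := by
    rw [SytStrip.Dk]
    have h1 : ((k+1 : ℕ) : ℤ) = (k : ℤ) + 1 := by push_cast; ring
    rw [h1, show (k:ℤ) + 1 + 3 = (k:ℤ) + 4 from by ring]
  rw [hD]
  simp only [show 4*(k+1)-2 = 4*k+2 from by omega, show 2*(k+1)-1 = 2*k+1 from by omega,
    show 2*(k+1)-2 = 2*k from by omega, show 2*(k+1) = 2*k+2 from by omega,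
    show 2*k+2-1 = 2*k+1 from by omega, show 2*k+2-2 = 2*k from by omega]
  have hadd := SytStrip.card_good_add k
  rw [SytStrip.card_CDt, SytStrip.card_ABt, ← SytStrip.sytCount_Dk] at hadd
  -- cast to ℚ
  have hq : (sytCount (SytStrip.Dk k) : ℚ) =
      ((4*k+2).choose (2*k+1) : ℚ) * (updownCount (2*k+1) : ℚ) * (updownCount (2*k+1) : ℚ) -
      ((4*k+2).choose (2*k+2) : ℚ) * (updownCount (2*k+2) : ℚ) * (updownCount (2*k) : ℚ) := by
    have h2 : (sytCount (SytStrip.Dk k) : ℚ) +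
        (((4*k+2).choose (2*k+2) * updownCount (2*k+2) * updownCount (2*k) : ℕ) : ℚ) =
        (((4*k+2).choose (2*k+1) * updownCount (2*k+1) * updownCount (2*k+1) : ℕ) : ℚ) := by
      exact_mod_cast congrArg (fun m : ℕ => (m : ℚ)) hadd
    push_cast at h2
    linarith
  rw [hq]
  have hfac1 : ((2*k+1).factorial : ℚ) ≠ 0 := by
    exact_mod_cast (2*k+1).factorial_ne_zero
  have hfac2 : ((2*k+2).factorial : ℚ) ≠ 0 := by
    exact_mod_cast (2*k+2).factorial_ne_zero
  have hfac0 : ((2*k).factorial : ℚ) ≠ 0 := by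
    exact_mod_cast (2*k).factorial_ne_zero
  have hc1 : ((4*k+2).choose (2*k+1) : ℚ) =
      ((4*k+2).factorial : ℚ) / (((2*k+1).factorial : ℚ) * ((2*k+1).factorial : ℚ)) := by
    rw [eq_div_iff (by exact mul_ne_zero hfac1 hfac1)]
    have h := Nat.choose_mul_factorial_mul_factorial (show 2*k+1 ≤ 4*k+2 by omega)
    rw [show 4*k+2-(2*k+1) = 2*k+1 from by omega] at h
    have h' : ((4*k+2).choose (2*k+1) : ℚ) * ((2*k+1).factorial : ℚ) *
        ((2*k+1).factorial : ℚ) = ((4*k+2).factorial : ℚ) := by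
      exact_mod_cast congrArg (fun m : ℕ => (m : ℚ)) h
    linear_combination h'
  have hc2 : ((4*k+2).choose (2*k+2) : ℚ) =
      ((4*k+2).factorial : ℚ) / (((2*k+2).factorial : ℚ) * ((2*k).factorial : ℚ)) := by
    rw [eq_div_iff (by exact mul_ne_zero hfac2 hfac0)]
    have h := Nat.choose_mul_factorial_mul_factorial (show 2*k+2 ≤ 4*k+2 by omega)
    rw [show 4*k+2-(2*k+2) = 2*k from by omega] at h
    have h' : ((4*k+2).choose (2*k+2) : ℚ) * ((2*k+2).factorial : ℚ) *
        ((2*k).factorial : ℚ) = ((4*k+2).factorial : ℚ) := by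
      exact_mod_cast congrArg (fun m : ℕ => (m : ℚ)) h
    linear_combination h'
  rw [hc1, hc2]
  field_simp
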